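/- Let p be a prime and let a_{p-1} = Σ_{k=0}^∞ k^{p-1} · 2^{-k}. Then a_{p-1} is an integer divisible by p. Equivalently, p divides Σ_{k=0}^{p-1} S(p-1,k) · k! · 2 where S denotes Stirling numbers of the second kind. -/

import Mathlib

def stirling2 : ℕ → ℕ → ℕ
  | 0, 0 => 1
  | 0, _ + 1 => 0
  | _ + 1, 0 => 0
  | n + 1, k + 1 => (k + 1) * stirling2 n (k + 1) + stirling2 n k

lemma stirling2_eq_zero : ∀ {n m : ℕ}, n < m → stirling2 n m = 0
  | 0, m + 1, _ => rfl
  | n + 1, m + 1, h => by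
    have h1 : n < m + 1 := by omega
    have h2 : n < m := by omega
    simp [stirling2, stirling2_eq_zero h1, stirling2_eq_zero h2]

lemma desc_key (k j : ℕ) :
    k * Nat.descFactorial k j = j * Nat.descFactorial k j + Nat.descFactorial k (j + 1) := by
  rcases le_or_gt j k with h | h
  · rw [Nat.descFactorial_succ]
    have : j + (k - j) = k := by omega
    nlinarith [Nat.sub_add_cancel h]
  · have h1 : Nat.descFactorial k j = 0 := Nat.descFactorial_eq_zero_iff_lt.2 h
    have h2 : Nat.descFactorial k (j + 1) = 0 := Nat.descFactorial_eq_zero_iff_lt.2 (by omega)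
    simp [h1, h2]

lemma key_nat (n k : ℕ) :
    k ^ n = ∑ j ∈ Finset.range (n + 1), stirling2 n j * Nat.descFactorial k j := by
  induction n with
  | zero => simp [stirling2]
  | succ n ih =>
    have step : ∑ j ∈ Finset.range (n + 2), stirling2 (n+1) j * Nat.descFactorial k j
        = ∑ j ∈ Finset.range (n + 1), stirling2 (n+1) (j+1) * Nat.descFactorial k (j+1) := by
      rw [Finset.sum_range_succ'] ; simp [stirling2]
    rw [step]
    have expand : ∀ j, stirling2 (n+1) (j+1) * Nat.descFactorial k (j+1)
        = (j+1) * stirling2 n (j+1) * Nat.descFactorial k (j+1)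
          + stirling2 n j * Nat.descFactorial k (j+1) := by
      intro j; simp [stirling2]; ring
    rw [Finset.sum_congr rfl fun j _ => expand j, Finset.sum_add_distrib]
    have shift : ∑ j ∈ Finset.range (n + 1), (j+1) * stirling2 n (j+1) * Nat.descFactorial k (j+1)
        = ∑ j ∈ Finset.range (n + 1), j * stirling2 n j * Nat.descFactorial k j := by
      rw [Finset.sum_range_succ, stirling2_eq_zero (by omega)]
      rw [Finset.sum_range_succ']
      simp
    rw [shift]
    calc k ^ (n+1) = ∑ j ∈ Finset.range (n + 1), stirling2 n j * (k * Nat.descFactorial k j) := by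
          rw [pow_succ, ih, Finset.sum_mul]; congr 1; ext j; ring
      _ = _ := by
          rw [← Finset.sum_add_distrib]
          congr 1; ext j
          rw [desc_key k j]; ring

lemma summable_choose (j : ℕ) :
    Summable (fun k : ℕ => (k.choose j : ℝ) * (1/2 : ℝ) ^ k) := by
  have hs : Summable (fun k : ℕ => (k : ℝ) ^ j * (1/2 : ℝ) ^ k) := by
    apply summable_pow_mul_geometric_of_norm_lt_one
    rw [Real.norm_eq_abs]; rw [abs_of_pos] <;> norm_num
  apply Summable.of_nonneg_of_le (fun k => by positivity) _ hs
  intro k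
  have h1 : (k.choose j : ℝ) ≤ (k : ℝ) ^ j := by
    exact_mod_cast Nat.choose_le_pow k j
  apply mul_le_mul_of_nonneg_right h1 (by positivity)

lemma tsum_choose (j : ℕ) :
    ∑' k : ℕ, (k.choose j : ℝ) * (1/2 : ℝ) ^ k = 2 := by
  induction j with
  | zero => simpa using tsum_geometric_two
  | succ j ih =>
    have hS := summable_choose (j+1)
    have hSj := summable_choose j
    have h := Summable.tsum_eq_zero_add hS
    have h2 : ∀ k : ℕ, ((k+1).choose (j+1) : ℝ) * (1/2:ℝ) ^ (k+1)
        = (1/2) * ((k.choose j : ℝ) * (1/2)^k) + (1/2) * ((k.choose (j+1) : ℝ) * (1/2)^k) := by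
      intro k
      rw [Nat.choose_succ_succ]
      push_cast
      ring
    rw [show ((Nat.choose 0 (j+1) : ℝ) * (1/2:ℝ) ^ (0:ℕ)) = 0 by simp] at h
    simp only [h2] at h
    rw [Summable.tsum_add (hSj.mul_left _) (hS.mul_left _), tsum_mul_left, tsum_mul_left, ih, zero_add] at h
    set x := ∑' k : ℕ, (k.choose (j+1) : ℝ) * (1/2 : ℝ) ^ k
    linarith

lemma tsum_pow (n : ℕ) : ∑' k : ℕ, (k : ℝ) ^ n * (1/2 : ℝ) ^ k
    = ∑ j ∈ Finset.range (n + 1), (stirling2 n j * Nat.factorial j * 2 : ℕ) := by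
  have step1 : ∀ k : ℕ, (k : ℝ) ^ n * (1/2 : ℝ) ^ k
      = ∑ j ∈ Finset.range (n + 1),
          ((stirling2 n j * Nat.factorial j : ℕ) : ℝ) * ((k.choose j : ℝ) * (1/2 : ℝ) ^ k) := by
    intro k
    have := key_nat n k
    calc (k : ℝ) ^ n * (1/2 : ℝ) ^ k = ((k ^ n : ℕ) : ℝ) * (1/2 : ℝ) ^ k := by push_cast; ring
      _ = _ := by
        rw [this]
        push_cast
        rw [Finset.sum_mul]
        congr 1; ext j
        rw [Nat.descFactorial_eq_factorial_mul_choose]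
        push_cast; ring
  calc ∑' k : ℕ, (k : ℝ) ^ n * (1/2 : ℝ) ^ k
      = ∑ j ∈ Finset.range (n + 1),
          ∑' k : ℕ, ((stirling2 n j * Nat.factorial j : ℕ) : ℝ) * ((k.choose j : ℝ) * (1/2 : ℝ) ^ k) := by
        rw [← Summable.tsum_finsetSum (fun j _ => (summable_choose j).mul_left _)]
        exact tsum_congr step1
    _ = _ := by
        push_cast
        congr 1; ext j
        rw [tsum_mul_left, tsum_choose]

def T (n k : ℕ) : ℤ := ∑ j ∈ Finset.range (k+1), (-1)^(k+j) * (k.choose j) * (j:ℤ)^n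

def W (n k : ℕ) : ℤ := ∑ i ∈ Finset.range (k+1), (-1)^(k+i) * (k.choose i) * ((i:ℤ)+1)^n

lemma sign_eq (k j : ℕ) : ((-1:ℤ))^(k+1+(j+1)) = (-1)^(k+j) := by
  have : k+1+(j+1) = (k+j)+2 := by ring
  rw [this, pow_add]; norm_num

lemma lemX (n k : ℕ) :
    ∑ j ∈ Finset.range (k+1), (-1:ℤ)^(k+j) * (k.choose (j+1)) * ((j:ℤ)+1)^n
      = -T n k + (-1)^k * (0:ℤ)^n := by
  set g : ℕ → ℤ := fun j => (-1:ℤ)^(k+j) * (k.choose j) * (j:ℤ)^n with hg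
  have h := (Finset.sum_range_succ g (k+1)).symm.trans (Finset.sum_range_succ' g (k+1))
  have hTk : ∑ j ∈ Finset.range (k+1), g j = T n k := rfl
  have hgk : g (k+1) = 0 := by simp [hg, Nat.choose_succ_self]
  have hg0 : g 0 = (-1:ℤ)^k * (0:ℤ)^n := by simp [hg]
  rw [hTk, hgk, hg0, add_zero] at h
  have e : ∀ j ∈ Finset.range (k+1),
      g (j+1) = -((-1:ℤ)^(k+j) * (k.choose (j+1)) * ((j:ℤ)+1)^n) := by
    intro j _
    simp only [hg]
    have : k+(j+1) = (k+j)+1 := by ring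
    rw [this, pow_succ]
    push_cast
    ring
  rw [Finset.sum_congr rfl e, Finset.sum_neg_distrib] at h
  linarith [h]

lemma lemA (n k : ℕ) : T n (k+1) = W n k - T n k := by
  set f : ℕ → ℤ := fun j => (-1:ℤ)^(k+1+j) * ((k+1).choose j) * (j:ℤ)^n with hf
  have h0 : T n (k+1) = ∑ j ∈ Finset.range (k+1), f (j+1) + f 0 :=
    Finset.sum_range_succ' f (k+1)
  have e : ∀ j ∈ Finset.range (k+1), f (j+1)
      = (-1:ℤ)^(k+j) * (k.choose j) * (((j:ℤ))+1)^n
        + (-1:ℤ)^(k+j) * (k.choose (j+1)) * (((j:ℤ))+1)^n := by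
    intro j _
    simp only [hf]
    rw [sign_eq, Nat.choose_succ_succ]
    push_cast; ring
  have hf0 : f 0 = -((-1:ℤ)^k * (0:ℤ)^n) := by
    simp only [hf]
    rw [add_zero, pow_succ]
    simp
  rw [Finset.sum_congr rfl e, Finset.sum_add_distrib, lemX, hf0] at h0
  rw [h0, W]
  ring

lemma lemB (n k : ℕ) : T (n+1) (k+1) = ((k:ℤ)+1) * W n k := by
  set f : ℕ → ℤ := fun j => (-1:ℤ)^(k+1+j) * ((k+1).choose j) * (j:ℤ)^(n+1) with hf
  have h0 : T (n+1) (k+1) = ∑ j ∈ Finset.range (k+1), f (j+1) + f 0 :=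
    Finset.sum_range_succ' f (k+1)
  have hf0 : f 0 = 0 := by simp [hf]
  have e : ∀ j ∈ Finset.range (k+1), f (j+1)
      = ((k:ℤ)+1) * ((-1:ℤ)^(k+j) * (k.choose j) * (((j:ℤ))+1)^n) := by
    intro j _
    simp only [hf]
    rw [sign_eq]
    have hc : ((k+1).choose (j+1) * (j+1) : ℤ) = (k+1) * (k.choose j) := by
      exact_mod_cast congrArg (Nat.cast : ℕ → ℤ) (Nat.add_one_mul_choose_eq k j).symm
    have expand : ((j:ℤ)+1)^(n+1) = ((j:ℤ)+1) * ((j:ℤ)+1)^n := by rw [pow_succ]; ring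
    push_cast at hc ⊢
    calc (-1:ℤ)^(k+j) * ((k+1).choose (j+1)) * ((j:ℤ)+1)^(n+1)
        = (-1:ℤ)^(k+j) * (((k+1).choose (j+1)) * ((j:ℤ)+1)) * ((j:ℤ)+1)^n := by
          rw [pow_succ]; ring
      _ = (-1:ℤ)^(k+j) * (((k:ℤ)+1) * (k.choose j)) * ((j:ℤ)+1)^n := by rw [hc]
      _ = _ := by ring
  rw [Finset.sum_congr rfl e, hf0, add_zero, ← Finset.mul_sum] at h0
  rw [h0, W]

lemma TU : ∀ n k, (Nat.factorial k * stirling2 n k : ℤ) = T n k := by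
  intro n
  induction n with
  | zero =>
    intro k
    have h : T 0 k = (-1:ℤ)^k * ∑ j ∈ Finset.range (k+1), (-1:ℤ)^j * (k.choose j) := by
      rw [T, Finset.mul_sum]
      apply Finset.sum_congr rfl
      intro j _
      rw [pow_add]; ring
    rw [h, Int.alternating_sum_range_choose]
    cases k with
    | zero => simp [stirling2]
    | succ k => simp [stirling2, Nat.factorial]
  | succ n ih =>
    intro k
    cases k with
    | zero => simp [stirling2, T]
    | succ k =>
      have hW : W n k = T n (k+1) + T n k := by
        have := lemA n k; linarith
      rw [lemB n k, hW, ← ih (k+1), ← ih k]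
      have h1 : stirling2 (n+1) (k+1) = (k+1) * stirling2 n (k+1) + stirling2 n k := rfl
      rw [h1, Nat.factorial_succ]
      push_cast
      ring


lemma Tmod (p : ℕ) [hF : Fact p.Prime] (k : ℕ) (hk : k < p) :
    ((T (p-1) k : ℤ) : ZMod p) = (-1)^k * (if k = 0 then 1 else 0) - (-1)^k := by
  have hp := hF.out
  have hp2 := hp.two_le
  have alt : (∑ j ∈ Finset.range (k+1), (-1:ZMod p)^j * (k.choose j))
      = if k = 0 then 1 else 0 := by
    have h := Int.alternating_sum_range_choose (n := k)
    calc ∑ j ∈ Finset.range (k+1), (-1:ZMod p)^j * (k.choose j)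
        = ((∑ j ∈ Finset.range (k+1), (-1:ℤ)^j * (k.choose j) : ℤ) : ZMod p) := by push_cast; rfl
      _ = _ := by rw [h]; split <;> simp
  set f : ℕ → ZMod p := fun j => (-1:ZMod p)^(k+j) * (k.choose j) * (j:ZMod p)^(p-1) with hfd
  have hcast : ((T (p-1) k : ℤ) : ZMod p) = ∑ j ∈ Finset.range (k+1), f j := by
    rw [T]; push_cast; rfl
  set g : ℕ → ZMod p := fun j => (-1:ZMod p)^j * (k.choose j) with hgd
  have hsplitf := Finset.sum_range_succ' f k
  have hsplitg := Finset.sum_range_succ' g k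
  have hf0 : f 0 = 0 := by
    simp [hfd, zero_pow (show p - 1 ≠ 0 by omega)]
  have hg0 : g 0 = 1 := by simp [hgd]
  have hfg : ∀ j ∈ Finset.range k, f (j+1) = (-1:ZMod p)^k * g (j+1) := by
    intro j hj
    simp only [Finset.mem_range] at hj
    have hne : ((j+1 : ℕ) : ZMod p) ≠ 0 := by
      rw [Ne, ZMod.natCast_eq_zero_iff]
      intro hdvd
      have := Nat.le_of_dvd (by omega) hdvd
      omega
    push_cast at hne
    simp only [hfd, hgd]
    push_cast
    rw [ZMod.pow_card_sub_one_eq_one hne, pow_add]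
    ring
  rw [hcast, hsplitf, hf0, add_zero, Finset.sum_congr rfl hfg, ← Finset.mul_sum, ← alt,
    hsplitg, hg0]
  ring

theorem dvd_final (p : ℕ) (hp : p.Prime) :
    p ∣ ∑ k ∈ Finset.range p, stirling2 (p - 1) k * Nat.factorial k * 2 := by
  rcases eq_or_ne p 2 with rfl | h2
  · decide
  · have hodd : Odd p := hp.odd_of_ne_two h2
    haveI : Fact p.Prime := ⟨hp⟩
    haveI : NeZero p := ⟨hp.pos.ne'⟩
    rw [← ZMod.natCast_eq_zero_iff]
    push_cast
    have e : ∀ k ∈ Finset.range p,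
        (stirling2 (p-1) k : ZMod p) * (Nat.factorial k : ZMod p) * 2
          = ((-1:ZMod p)^k * (if k = 0 then 1 else 0) - (-1)^k) * 2 := by
      intro k hk
      simp only [Finset.mem_range] at hk
      rw [← Tmod p k hk, ← TU (p-1) k]
      push_cast
      ring
    rw [Finset.sum_congr rfl e, ← Finset.sum_mul]
    have hs : ∑ k ∈ Finset.range p, ((-1:ZMod p)^k * (if k = 0 then 1 else 0) - (-1)^k)
        = ∑ k ∈ Finset.range p, (-1:ZMod p)^k * (if k = 0 then 1 else 0)
          - ∑ k ∈ Finset.range p, (-1:ZMod p)^k := Finset.sum_sub_distrib _ _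
    rw [hs, neg_one_geom_sum, if_neg (by simpa using hodd)]
    have hone : ∑ k ∈ Finset.range p, (-1:ZMod p)^k * (if k = 0 then 1 else 0) = 1 := by
      rw [Finset.sum_eq_single 0]
      · simp
      · intro b _ hb; simp [hb]
      · intro h; exact absurd (Finset.mem_range.2 hp.pos) h
    rw [hone]
    ring

theorem stmt_15 (p : ℕ) (hp : p.Prime) :
    (∃ m : ℤ, (∑' k : ℕ, (k : ℝ) ^ (p - 1) * 2 ^ (-(k : ℤ))) = (m : ℝ) ∧ (p : ℤ) ∣ m) ∧
    p ∣ ∑ k ∈ Finset.range p, stirling2 (p - 1) k * Nat.factorial k * 2 := by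
  have hdvd := dvd_final p hp
  refine ⟨⟨(∑ k ∈ Finset.range p, stirling2 (p - 1) k * Nat.factorial k * 2 : ℕ), ?_, ?_⟩, hdvd⟩
  · have hterm : ∀ k : ℕ, (k : ℝ) ^ (p - 1) * 2 ^ (-(k : ℤ))
        = (k : ℝ) ^ (p - 1) * (1/2 : ℝ) ^ k := by
      intro k
      rw [zpow_neg, zpow_natCast, ← inv_pow, one_div]
    rw [tsum_congr hterm, tsum_pow (p - 1)]
    have : p - 1 + 1 = p := Nat.succ_pred_eq_of_pos hp.pos
    rw [this]
    push_cast
    ring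
  · exact_mod_cast hdvd
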